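/- Fix an integer s ≥ 1. There exists a constant C depending only on s such that the following holds for every n ≥ max(s, 2): for every game ν : 2^N → ℝ on N = {1,…,n}, every S ⊆ N with |S| = s, and every m ≥ 1, if T_1,…,T_m are sampled i.i.d. from leverage sampling P(T) = 1/((n+1) · C(n, |T|)), then the MSR estimator of the Shapley interaction index (with weights p_t^s(n) = 1/((n−s+1) · C(n−s, t))) satisfies Var[φ̂_S] ≤ C · ‖ν‖_∞² · log(n) / m when s = 1, and Var[φ̂_S] ≤ C · ‖ν‖_∞² · n^{s−1} / m when s ≥ 2. -/

import Mathlib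

open Finset

/-- Expectation of a function of `m` i.i.d. coalitions drawn from the distribution `P`
on `2^N` (players modeled as `Fin n`): the joint sample space is `Fin m → Finset (Fin n)`
with product weights. -/
noncomputable def expec {n m : ℕ} (P : Finset (Fin n) → ℝ)
    (f : (Fin m → Finset (Fin n)) → ℝ) : ℝ :=
  ∑ ω : Fin m → Finset (Fin n), (∏ i, P (ω i)) * f ω

/-- Variance of a function of `m` i.i.d. coalitions drawn from `P`. -/
noncomputable def varFin {n m : ℕ} (P : Finset (Fin n) → ℝ)
    (f : (Fin m → Finset (Fin n)) → ℝ) : ℝ :=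
  expec P fun ω => (f ω - expec P f) ^ 2

/-- Discrete derivative `Δ_S ν(T) = ∑_{L ⊆ S} (−1)^{|S|−|L|} ν(T ∪ L)`. -/
noncomputable def discDeriv {n : ℕ} (ν : Finset (Fin n) → ℝ) (S T : Finset (Fin n)) : ℝ :=
  ∑ L ∈ S.powerset, (-1 : ℝ) ^ (S.card - L.card) * ν (T ∪ L)

/-- Cardinal-probabilistic interaction index
`φ_S(ν) = ∑_{T ⊆ N\S} p_{|T|}^{|S|} Δ_S ν(T)` with interaction weights `p t s`. -/
noncomputable def interIdx {n : ℕ} (p : ℕ → ℕ → ℝ) (ν : Finset (Fin n) → ℝ)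
    (S : Finset (Fin n)) : ℝ :=
  ∑ T ∈ (univ \ S).powerset, p T.card S.card * discDeriv ν S T

/-- The MSR estimator
`φ̂_S(ω) = (1/m) ∑_i ν(T_i) (−1)^{s−|S∩T_i|} p^s_{|T_i|−|S∩T_i|} / P(T_i)`. -/
noncomputable def msr {n : ℕ} (m : ℕ) (ν : Finset (Fin n) → ℝ) (p : ℕ → ℕ → ℝ)
    (S : Finset (Fin n)) (P : Finset (Fin n) → ℝ)
    (ω : Fin m → Finset (Fin n)) : ℝ :=
  (1 / (m : ℝ)) * ∑ i, ν (ω i) * (-1 : ℝ) ^ (S.card - (S ∩ ω i).card)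
      * p ((ω i).card - (S ∩ ω i).card) S.card / P (ω i)

/-- Sup norm `‖ν‖_∞ = max_{T ⊆ N} |ν(T)|`. -/
noncomputable def supNorm {n : ℕ} (ν : Finset (Fin n) → ℝ) : ℝ :=
  Finset.univ.sup' ⟨∅, Finset.mem_univ ∅⟩ fun T => |ν T|


/-- Shapley interaction weight `p_t^s(n) = 1/((n−s+1) C(n−s, t))`. -/
noncomputable def shapW (n t s : ℕ) : ℝ :=
  1 / (((n - s + 1 : ℕ) : ℝ) * (Nat.choose (n - s) t : ℝ))

/-- Leverage-sampling probability `P(T) = 1/((n+1) C(n, |T|))`. -/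
noncomputable def lev (n : ℕ) (T : Finset (Fin n)) : ℝ :=
  1 / (((n + 1 : ℕ) : ℝ) * (Nat.choose n T.card : ℝ))

section MSRAux
open Nat

section Prob
variable {n m : ℕ} (P : Finset (Fin n) → ℝ)

lemma sum_pi_prod (G : Fin m → Finset (Fin n) → ℝ) :
    ∑ ω : Fin m → Finset (Fin n), ∏ i, G i (ω i) = ∏ i, ∑ T, G i T := by
  rw [Finset.prod_univ_sum, Fintype.piFinset_univ]

lemma marginal (hP : ∑ T, P T = 1) (g : Finset (Fin n) → ℝ) (j : Fin m) :
    ∑ ω : Fin m → Finset (Fin n), (∏ i, P (ω i)) * g (ω j)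
      = ∑ T, P T * g T := by
  have h : ∀ ω : Fin m → Finset (Fin n),
      (∏ i, P (ω i)) * g (ω j)
        = ∏ i, (fun i T => P T * if i = j then g T else 1) i (ω i) := by
    intro ω
    simp only [Finset.prod_mul_distrib]
    congr 1
    simp
  rw [Finset.sum_congr rfl (fun ω _ => h ω),
    sum_pi_prod (fun i T => P T * if i = j then g T else 1)]
  have h2 : ∀ i : Fin m, (∑ T, P T * if i = j then g T else 1)
      = if i = j then ∑ T, P T * g T else 1 := by
    intro i
    by_cases hij : i = j <;> simp [hij, hP]
  rw [Finset.prod_congr rfl (fun i _ => h2 i)]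
  simp

lemma marginal_pair (hP : ∑ T, P T = 1) (g : Finset (Fin n) → ℝ) {i₀ j₀ : Fin m}
    (hij : i₀ ≠ j₀) :
    ∑ ω : Fin m → Finset (Fin n), (∏ i, P (ω i)) * (g (ω i₀) * g (ω j₀))
      = (∑ T, P T * g T) * (∑ T, P T * g T) := by
  have h : ∀ ω : Fin m → Finset (Fin n),
      (∏ i, P (ω i)) * (g (ω i₀) * g (ω j₀))
        = ∏ i, (fun i T => P T * ((if i = i₀ then g T else 1) * (if i = j₀ then g T else 1)))
            i (ω i) := by
    intro ω
    simp only [Finset.prod_mul_distrib]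
    simp
  rw [Finset.sum_congr rfl (fun ω _ => h ω),
    sum_pi_prod (fun i T => P T * ((if i = i₀ then g T else 1) * (if i = j₀ then g T else 1)))]
  have h2 : ∀ i : Fin m,
      (∑ T, P T * ((if i = i₀ then g T else 1) * (if i = j₀ then g T else 1)))
        = (if i = i₀ then ∑ T, P T * g T else 1) * (if i = j₀ then ∑ T, P T * g T else 1) := by
    intro i
    by_cases h1 : i = i₀ <;> by_cases h2 : i = j₀
    · exact absurd (h1 ▸ h2) hij
    · simp [h1, h2, hij, Ne.symm hij]
    · simp [h1, h2, hij, Ne.symm hij]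
    · simp [h1, h2, hP]
  rw [Finset.prod_congr rfl (fun i _ => h2 i), Finset.prod_mul_distrib]
  simp
end Prob


section Var
variable {n m : ℕ} (P : Finset (Fin n) → ℝ)

lemma expec_mass (hP : ∑ T, P T = 1) :
    ∑ ω : Fin m → Finset (Fin n), (∏ i, P (ω i)) = 1 := by
  rw [show (∑ ω : Fin m → Finset (Fin n), ∏ i, P (ω i))
      = ∑ ω : Fin m → Finset (Fin n), ∏ i, (fun _ T => P T) i (ω i) from rfl,
    sum_pi_prod (fun _ T => P T)]
  simp [hP]

lemma expec_smul (c : ℝ) (f : (Fin m → Finset (Fin n)) → ℝ) :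
    expec P (fun ω => c * f ω) = c * expec P f := by
  simp [expec, Finset.mul_sum, mul_left_comm]

lemma expec_add (f g : (Fin m → Finset (Fin n)) → ℝ) :
    expec P (fun ω => f ω + g ω) = expec P f + expec P g := by
  simp [expec, mul_add, Finset.sum_add_distrib]

lemma expec_sum {γ : Type*} (s : Finset γ) (f : γ → (Fin m → Finset (Fin n)) → ℝ) :
    expec P (fun ω => ∑ x ∈ s, f x ω) = ∑ x ∈ s, expec P (f x) := by
  simp only [expec, Finset.mul_sum]
  exact Finset.sum_comm

lemma expec_const (hP : ∑ T, P T = 1) (c : ℝ) :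
    expec P (fun _ : Fin m → Finset (Fin n) => c) = c := by
  simp only [expec]
  rw [← Finset.sum_mul, expec_mass P hP, one_mul]

lemma varFin_eq_sub (hP : ∑ T, P T = 1) (f : (Fin m → Finset (Fin n)) → ℝ) :
    varFin P f = expec P (fun ω => f ω ^ 2) - (expec P f) ^ 2 := by
  have h : (fun ω => (f ω - expec P f) ^ 2)
      = fun ω : Fin m → Finset (Fin n) =>
        f ω ^ 2 + ((-(2 * expec P f)) * f ω + (expec P f) ^ 2) := by
    funext ω; ring
  rw [varFin, h, expec_add P (fun ω => f ω ^ 2)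
      (fun ω => (-(2 * expec P f)) * f ω + (expec P f) ^ 2),
    expec_add P (fun ω => (-(2 * expec P f)) * f ω) (fun _ => (expec P f) ^ 2),
    expec_smul, expec_const P hP]
  ring

lemma varFin_avg (hP : ∑ T, P T = 1) (g : Finset (Fin n) → ℝ) (hm : 1 ≤ m) :
    varFin (m := m) P (fun ω => (1 / (m : ℝ)) * ∑ i, g (ω i))
      = ((∑ T, P T * g T ^ 2) - (∑ T, P T * g T) ^ 2) / m := by
  have hm0 : (m : ℝ) ≠ 0 := Nat.cast_ne_zero.mpr (by omega)
  set E := ∑ T, P T * g T with hEdef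
  set V := ∑ T, P T * g T ^ 2 with hVdef
  have hmarg : ∀ j : Fin m, expec P (fun ω : Fin m → Finset (Fin n) => g (ω j)) = E :=
    fun j => marginal P hP g j
  have hE : expec P (fun ω : Fin m → Finset (Fin n) => (1 / (m : ℝ)) * ∑ i, g (ω i))
      = E := by
    rw [expec_smul P (1 / (m : ℝ)) (fun ω => ∑ i, g (ω i)),
      expec_sum P univ (fun i ω => g (ω i))]
    rw [Finset.sum_congr rfl (fun i _ => hmarg i)]
    simp [Finset.card_univ]
    field_simp
  have hpair : ∀ i j : Fin m,
      expec P (fun ω : Fin m → Finset (Fin n) => g (ω i) * g (ω j))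
        = if i = j then V else E ^ 2 := by
    intro i j
    by_cases hij : i = j
    · subst hij
      rw [if_pos rfl, hVdef]
      have h2 : ∑ T, P T * g T ^ 2 = ∑ T, P T * (g T * g T) := by
        exact Finset.sum_congr rfl fun T _ => by ring
      rw [h2]
      exact marginal P hP (fun T => g T * g T) i
    · rw [if_neg hij]
      have h2 : E ^ 2 = (∑ T, P T * g T) * (∑ T, P T * g T) := by rw [hEdef]; ring
      rw [h2]
      exact marginal_pair P hP g hij
  have hE2 : expec P (fun ω : Fin m → Finset (Fin n) => ((1 / (m : ℝ)) * ∑ i, g (ω i)) ^ 2)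
      = (1 / (m : ℝ) ^ 2) * ((m : ℝ) * V + ((m : ℝ) ^ 2 - m) * E ^ 2) := by
    have expand : (fun ω : Fin m → Finset (Fin n) => ((1 / (m : ℝ)) * ∑ i, g (ω i)) ^ 2)
        = fun ω : Fin m → Finset (Fin n) =>
            (1 / (m : ℝ) ^ 2) * ∑ i, ∑ j, g (ω i) * g (ω j) := by
      funext ω
      rw [← Finset.sum_mul_sum]
      ring
    rw [expand, expec_smul P (1 / (m : ℝ) ^ 2)
        (fun ω => ∑ i, ∑ j, g (ω i) * g (ω j)),
      expec_sum P univ (fun i ω => ∑ j, g (ω i) * g (ω j))]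
    have hin : ∀ i : Fin m, expec P (fun ω : Fin m → Finset (Fin n) => ∑ j, g (ω i) * g (ω j))
        = V + ((m : ℝ) - 1) * E ^ 2 := by
      intro i
      rw [expec_sum P univ (fun j ω => g (ω i) * g (ω j)),
        Finset.sum_congr rfl (fun j _ => hpair i j)]
      have h : ∀ j : Fin m, (if i = j then V else E ^ 2)
          = E ^ 2 + (if i = j then V - E ^ 2 else 0) := by
        intro j; split <;> ring
      rw [Finset.sum_congr rfl (fun j _ => h j), Finset.sum_add_distrib, Finset.sum_ite_eq]
      simp [Finset.card_univ]
      ring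
    rw [Finset.sum_congr rfl (fun i _ => hin i)]
    simp only [Finset.sum_const, Finset.card_univ, Fintype.card_fin, nsmul_eq_mul]
    ring
  rw [varFin_eq_sub P hP]
  simp only [hE2, hE]
  field_simp
  ring
end Var



lemma sum_powerset_card {α : Type*} (s : Finset α) (f : ℕ → ℝ) :
    ∑ T ∈ s.powerset, f T.card = ∑ t ∈ range (s.card + 1), (s.card.choose t : ℝ) * f t := by
  rw [sum_powerset_apply_card]
  simp only [nsmul_eq_mul]

lemma sum_lev_one (n : ℕ) :
    ∑ T : Finset (Fin n), (1 : ℝ) / (((n + 1 : ℕ) : ℝ) * (Nat.choose n T.card : ℝ)) = 1 := by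
  rw [← Finset.powerset_univ, sum_powerset_card (univ : Finset (Fin n))
      (fun t => (1 : ℝ) / (((n + 1 : ℕ) : ℝ) * (Nat.choose n t : ℝ)))]
  simp only [Finset.card_univ, Fintype.card_fin]
  have h : ∀ t ∈ range (n + 1), (n.choose t : ℝ) * (1 / (((n + 1 : ℕ) : ℝ) * (n.choose t : ℝ)))
      = 1 / (n + 1 : ℝ) := by
    intro t ht
    have hpos : 0 < n.choose t := Nat.choose_pos (Nat.lt_succ_iff.mp (Finset.mem_range.1 ht))
    have hc : (n.choose t : ℝ) ≠ 0 := Nat.cast_ne_zero.mpr hpos.ne'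
    rw [mul_one_div, mul_comm (((n + 1 : ℕ) : ℝ)) _, ← div_div, div_self hc]
    push_cast
    ring
  rw [Finset.sum_congr rfl h, Finset.sum_const, Finset.card_range, nsmul_eq_mul]
  have : ((n : ℝ) + 1) ≠ 0 := by positivity
  field_simp
  norm_num

lemma sum_split {n : ℕ} (S : Finset (Fin n)) (F : Finset (Fin n) → ℝ) :
    ∑ T : Finset (Fin n), F T = ∑ A ∈ S.powerset, ∑ B ∈ Sᶜ.powerset, F (A ∪ B) := by
  have h2 : ∑ p ∈ S.powerset ×ˢ Sᶜ.powerset, F (p.1 ∪ p.2)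
      = ∑ A ∈ S.powerset, ∑ B ∈ Sᶜ.powerset, F (A ∪ B) :=
    Finset.sum_product' S.powerset Sᶜ.powerset (fun A B => F (A ∪ B))
  rw [← h2]
  refine Finset.sum_bij' (s := (univ : Finset (Finset (Fin n))))
    (t := S.powerset ×ˢ Sᶜ.powerset) (f := F) (g := fun p => F (p.1 ∪ p.2))
    (fun T _ => (T ∩ S, T \ S)) (fun p _ => p.1 ∪ p.2) ?_ ?_ ?_ ?_ ?_
  · intro T _
    simp only [Finset.mem_product, Finset.mem_powerset]
    exact ⟨Finset.inter_subset_right, fun x hx => by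
      simp only [Finset.mem_compl]; exact (Finset.mem_sdiff.1 hx).2⟩
  · intro p _; exact Finset.mem_univ _
  · intro T _
    ext x; simp only [Finset.mem_union, Finset.mem_inter, Finset.mem_sdiff]; tauto
  · intro p hp
    simp only [Finset.mem_product, Finset.mem_powerset] at hp
    obtain ⟨h1, h2⟩ := hp
    have hd : ∀ x ∈ p.2, x ∉ S := fun x hx => Finset.mem_compl.1 (h2 hx)
    ext1
    · simp only [Finset.union_inter_distrib_right]
      rw [Finset.inter_eq_left.2 h1]
      have : p.2 ∩ S = ∅ := Finset.eq_empty_of_forall_notMem fun x hx =>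
        (hd x (Finset.mem_inter.1 hx).1) (Finset.mem_inter.1 hx).2
      rw [this, Finset.union_empty]
    · simp only [Finset.union_sdiff_distrib]
      have h3 : p.1 \ S = ∅ := Finset.eq_empty_of_forall_notMem fun x hx =>
        (Finset.mem_sdiff.1 hx).2 (h1 (Finset.mem_sdiff.1 hx).1)
      have h4 : p.2 \ S = p.2 := Finset.sdiff_eq_self_of_disjoint
        (Finset.disjoint_left.2 hd)
      rw [h3, h4, Finset.empty_union]
  · intro T _
    have : T ∩ S ∪ T \ S = T := by
      ext x; simp only [Finset.mem_union, Finset.mem_inter, Finset.mem_sdiff]; tauto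
    simp only [this]

lemma pow_le_descFactorial (a : ℕ) : ∀ k : ℕ, (a + 1) ^ k ≤ (a + k).descFactorial k := by
  intro k
  induction k with
  | zero => simp
  | succ k ih =>
      rw [pow_succ, Nat.descFactorial_succ]
      have h1 : (a + k).descFactorial k ≤ (a + (k + 1)).descFactorial k :=
        Nat.descFactorial_le k (by omega)
      have h2 : a + (k + 1) - k = a + 1 := by omega
      rw [h2]
      calc (a + 1) ^ k * (a + 1) ≤ (a + k).descFactorial k * (a + 1) := by
            exact Nat.mul_le_mul_right _ ih
        _ ≤ (a + (k + 1)).descFactorial k * (a + 1) := Nat.mul_le_mul_right _ h1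
        _ = (a + 1) * (a + (k + 1)).descFactorial k := Nat.mul_comm _ _

lemma key_id (n s k j : ℕ) (hs : s ≤ n) (hk : k ≤ s) (hj : j ≤ n - s) :
    n.choose (k + j) * (k + j).descFactorial k * (n - j - k).descFactorial (s - k)
      = (n - s).choose j * n.descFactorial s := by
  have hkj : k + j ≤ n := by omega
  have h1 : j ! * (k + j).descFactorial k = (k + j)! := by
    have := Nat.factorial_mul_descFactorial (show k ≤ k + j by omega)
    rwa [show k + j - k = j by omega] at this
  have h2 : (n - s - j)! * (n - j - k).descFactorial (s - k) = (n - j - k)! := by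
    have hsk : s - k ≤ n - j - k := by omega
    have := Nat.factorial_mul_descFactorial hsk
    rwa [show n - j - k - (s - k) = n - s - j by omega] at this
  have h3 : (n - s)! * n.descFactorial s = n ! := Nat.factorial_mul_descFactorial hs
  have h4 : n.choose (k + j) * (k + j)! * (n - (k + j))! = n ! :=
    Nat.choose_mul_factorial_mul_factorial hkj
  have h5 : (n - s).choose j * j ! * (n - s - j)! = (n - s)! :=
    Nat.choose_mul_factorial_mul_factorial hj
  have e1 : n - j - k = n - (k + j) := by omega
  apply Nat.eq_of_mul_eq_mul_right (show 0 < j ! * (n - s - j)! * (n - s)! by positivity)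
  calc n.choose (k + j) * (k + j).descFactorial k * (n - j - k).descFactorial (s - k)
        * (j ! * (n - s - j)! * (n - s)!)
      = n.choose (k + j) * (j ! * (k + j).descFactorial k)
          * ((n - s - j)! * (n - j - k).descFactorial (s - k)) * (n - s)! := by ring
    _ = n.choose (k + j) * (k + j)! * (n - j - k)! * (n - s)! := by rw [h1, h2]
    _ = n.choose (k + j) * (k + j)! * (n - (k + j))! * (n - s)! := by rw [e1]
    _ = n ! * (n - s)! := by rw [h4]
    _ = (n - s).choose j * n.descFactorial s * (j ! * (n - s - j)! * (n - s)!) := by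
        rw [show (n - s).choose j * n.descFactorial s * (j ! * (n - s - j)! * (n - s)!)
            = ((n - s).choose j * j ! * (n - s - j)!) * ((n - s)! * n.descFactorial s) by ring,
          h5, h3]
        ring

lemma key_le (n s k j : ℕ) (hs : s ≤ n) (hk : k ≤ s) (hj : j ≤ n - s) :
    n.choose (k + j) * ((j + 1) ^ k * (n - s - j + 1) ^ (s - k))
      ≤ n ^ s * (n - s).choose j := by
  have b1 : (j + 1) ^ k ≤ (k + j).descFactorial k := by
    have := pow_le_descFactorial j k
    rwa [Nat.add_comm j k] at this
  have b2 : (n - s - j + 1) ^ (s - k) ≤ (n - j - k).descFactorial (s - k) := by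
    have := pow_le_descFactorial (n - s - j) (s - k)
    rwa [show n - s - j + (s - k) = n - j - k by omega] at this
  calc n.choose (k + j) * ((j + 1) ^ k * (n - s - j + 1) ^ (s - k))
      ≤ n.choose (k + j) * ((k + j).descFactorial k * (n - j - k).descFactorial (s - k)) :=
        Nat.mul_le_mul_left _ (Nat.mul_le_mul b1 b2)
    _ = (n - s).choose j * n.descFactorial s := by
        rw [← Nat.mul_assoc]; exact key_id n s k j hs hk hj
    _ ≤ (n - s).choose j * n ^ s := Nat.mul_le_mul_left _ (Nat.descFactorial_le_pow n s)
    _ = n ^ s * (n - s).choose j := Nat.mul_comm _ _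

lemma log_step (N : ℕ) (hN : 1 ≤ N) :
    (1 : ℝ) / (N + 1) ≤ Real.log (N + 1) - Real.log N := by
  have hN0 : (0 : ℝ) < N := by exact_mod_cast hN
  have hx : (0 : ℝ) < (N : ℝ) / (N + 1) := by positivity
  have h := Real.log_le_sub_one_of_pos hx
  rw [Real.log_div hN0.ne' (by positivity)] at h
  have : (N : ℝ) / (N + 1) - 1 = -(1 / (N + 1)) := by field_simp; ring
  rw [this] at h
  linarith

lemma harmonic_le_log (N : ℕ) (hN : 1 ≤ N) :
    ∑ j ∈ range N, (1 : ℝ) / (j + 1) ≤ 1 + Real.log N := by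
  induction N with
  | zero => omega
  | succ N ih =>
      rcases Nat.eq_or_lt_of_le hN with h1 | h1
      · simp [← h1]
      · have hN' : 1 ≤ N := by omega
        rw [Finset.sum_range_succ]
        have := log_step N hN'
        have hle := ih hN'
        push_cast
        push_cast at this hle
        linarith

lemma sq_sum_le_two' (N : ℕ) (hN : 1 ≤ N) :
    ∑ j ∈ range N, (1 : ℝ) / (j + 1) ^ 2 ≤ 2 - 1 / (N : ℝ) := by
  induction N with
  | zero => omega
  | succ N ih =>
      rcases Nat.eq_or_lt_of_le hN with h1 | h1
      · simp [← h1]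
        norm_num
      · have hN' : 1 ≤ N := by omega
        have hN0 : (0 : ℝ) < N := by exact_mod_cast hN'
        rw [Finset.sum_range_succ]
        have hle := ih hN'
        have key : (1 : ℝ) / ((N : ℝ) + 1) ^ 2 ≤ 1 / N - 1 / (N + 1) := by
          rw [div_sub_div _ _ hN0.ne' (by positivity)]
          rw [div_le_div_iff₀ (by positivity) (by positivity)]
          ring_nf
          nlinarith [hN0]
        push_cast
        push_cast at hle key
        linarith

lemma sq_sum_le_two (N : ℕ) :
    ∑ j ∈ range N, (1 : ℝ) / (j + 1) ^ 2 ≤ 2 := by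
  rcases Nat.eq_zero_or_pos N with h | h
  · simp [h]
  · have := sq_sum_le_two' N h
    have h0 : (0 : ℝ) < N := by exact_mod_cast h
    have : (0:ℝ) < 1/N := by positivity
    linarith [sq_sum_le_two' N h]

lemma unif_bound (a b : ℝ) (ha : 1 ≤ a) (hb : 1 ≤ b) (s k : ℕ) (hk : k ≤ s) (hs2 : 2 ≤ s) :
    1 / (a ^ k * b ^ (s - k)) ≤ 1 / a ^ 2 + 1 / b ^ 2 := by
  have ha0 : (0:ℝ) < a := by linarith
  have hb0 : (0:ℝ) < b := by linarith
  have hbpow : ∀ e : ℕ, (1:ℝ) ≤ b ^ e := fun e => one_le_pow₀ hb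
  have hapow : ∀ e : ℕ, (1:ℝ) ≤ a ^ e := fun e => one_le_pow₀ ha
  by_cases h2k : 2 ≤ k
  · have : a ^ 2 ≤ a ^ k * b ^ (s - k) := by
      calc a ^ 2 ≤ a ^ k := pow_le_pow_right₀ ha h2k
        _ = a ^ k * 1 := (mul_one _).symm
        _ ≤ a ^ k * b ^ (s - k) := by
            exact mul_le_mul_of_nonneg_left (hbpow _) (by positivity)
    have h1 : 1 / (a ^ k * b ^ (s - k)) ≤ 1 / a ^ 2 :=
      one_div_le_one_div_of_le (by positivity) this
    have : (0:ℝ) < 1 / b ^ 2 := by positivity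
    linarith
  · by_cases h2sk : 2 ≤ s - k
    · have : b ^ 2 ≤ a ^ k * b ^ (s - k) := by
        calc b ^ 2 ≤ b ^ (s - k) := pow_le_pow_right₀ hb h2sk
          _ = 1 * b ^ (s - k) := (one_mul _).symm
          _ ≤ a ^ k * b ^ (s - k) := by
              exact mul_le_mul_of_nonneg_right (hapow _) (by positivity)
      have h1 : 1 / (a ^ k * b ^ (s - k)) ≤ 1 / b ^ 2 :=
        one_div_le_one_div_of_le (by positivity) this
      have : (0:ℝ) < 1 / a ^ 2 := by positivity
      linarith
    · -- k ≤ 1 and s - k ≤ 1, s ≥ 2 forces k = 1, s = 2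
      have hk1 : k = 1 := by omega
      have hs2' : s = 2 := by omega
      subst hk1; subst hs2'
      simp only [pow_one, show 2 - 1 = 1 from rfl]
      rw [div_add_div _ _ (by positivity) (by positivity),
        div_le_div_iff₀ (by positivity) (by positivity)]
      nlinarith [sq_nonneg (a - b), sq_nonneg (a*b - 1), mul_pos ha0 hb0]


lemma shapW_pos (n s j : ℕ) (hj : j ≤ n - s) : 0 < shapW n j s := by
  have h1 : 0 < (n - s).choose j := Nat.choose_pos hj
  have : (0:ℝ) < ((n - s + 1 : ℕ) : ℝ) := by positivity
  have : (0:ℝ) < ((n - s).choose j : ℝ) := by exact_mod_cast h1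
  rw [shapW]
  positivity

lemma shapW_le_one (n s j : ℕ) (hj : j ≤ n - s) : shapW n j s ≤ 1 := by
  rw [shapW]
  have h1 : 1 ≤ (n - s).choose j := Nat.choose_pos hj
  have h2 : (1:ℝ) ≤ ((n - s + 1 : ℕ) : ℝ) * ((n - s).choose j : ℝ) := by
    have : (1:ℝ) ≤ ((n - s + 1 : ℕ) : ℝ) := by exact_mod_cast Nat.succ_le_succ (Nat.zero_le _)
    have h3 : (1:ℝ) ≤ ((n - s).choose j : ℝ) := by exact_mod_cast h1
    nlinarith
  rw [div_le_one (by linarith)]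
  linarith

lemma card_diff_le {n : ℕ} (S T : Finset (Fin n)) (s : ℕ) (hS : S.card = s) :
    T.card - (S ∩ T).card ≤ n - s := by
  have h1 : (T \ S).card + (T ∩ S).card = T.card := Finset.card_sdiff_add_card_inter T S
  have h2 : (T ∩ S).card = (S ∩ T).card := by rw [Finset.inter_comm]
  have h3 : (T \ S).card ≤ Sᶜ.card := Finset.card_le_card (fun x hx => by
    simp only [Finset.mem_compl]
    exact (Finset.mem_sdiff.1 hx).2)
  have h4 : Sᶜ.card = n - s := by
    rw [Finset.card_compl, hS, Fintype.card_fin]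
  omega

lemma sigma_small (n s : ℕ) (S : Finset (Fin n)) (hS : S.card = s) :
    ∑ T : Finset (Fin n), ((n + 1 : ℕ) : ℝ) * (n.choose T.card : ℝ)
        * shapW n (T.card - (S ∩ T).card) s ^ 2
      ≤ ((n + 1 : ℕ) : ℝ) * 4 ^ n := by
  have hterm : ∀ T : Finset (Fin n),
      ((n + 1 : ℕ) : ℝ) * (n.choose T.card : ℝ) * shapW n (T.card - (S ∩ T).card) s ^ 2
        ≤ ((n + 1 : ℕ) : ℝ) * 2 ^ n := by
    intro T
    have hj := card_diff_le S T s hS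
    have hw1 : shapW n (T.card - (S ∩ T).card) s ≤ 1 := shapW_le_one n s _ hj
    have hw0 : 0 < shapW n (T.card - (S ∩ T).card) s := shapW_pos n s _ hj
    have hchN : n.choose T.card ≤ 2 ^ n := by
      by_cases h : T.card ≤ n
      · calc n.choose T.card ≤ ∑ i ∈ range (n + 1), n.choose i :=
            Finset.single_le_sum (f := fun i => n.choose i) (fun i _ => Nat.zero_le _)
              (Finset.mem_range.2 (by omega))
          _ = 2 ^ n := Nat.sum_range_choose n
      · rw [Nat.choose_eq_zero_of_lt (by omega : n < T.card)]
        exact Nat.zero_le _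
    have hch : (n.choose T.card : ℝ) ≤ 2 ^ n := by exact_mod_cast hchN
    have hsq : shapW n (T.card - (S ∩ T).card) s ^ 2 ≤ 1 := by nlinarith
    have h0 : (0:ℝ) ≤ ((n + 1 : ℕ) : ℝ) := by positivity
    calc ((n + 1 : ℕ) : ℝ) * (n.choose T.card : ℝ) * shapW n (T.card - (S ∩ T).card) s ^ 2
        ≤ ((n + 1 : ℕ) : ℝ) * (n.choose T.card : ℝ) * 1 := by
          apply mul_le_mul_of_nonneg_left hsq (by positivity)
      _ = ((n + 1 : ℕ) : ℝ) * (n.choose T.card : ℝ) := by ring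
      _ ≤ ((n + 1 : ℕ) : ℝ) * 2 ^ n := by
          apply mul_le_mul_of_nonneg_left hch h0
  calc ∑ T : Finset (Fin n), ((n + 1 : ℕ) : ℝ) * (n.choose T.card : ℝ)
        * shapW n (T.card - (S ∩ T).card) s ^ 2
      ≤ ∑ _T : Finset (Fin n), ((n + 1 : ℕ) : ℝ) * 2 ^ n :=
        Finset.sum_le_sum fun T _ => hterm T
    _ = (2 ^ n : ℝ) * (((n + 1 : ℕ) : ℝ) * 2 ^ n) := by
        rw [Finset.sum_const, nsmul_eq_mul]
        congr 1
        rw [Finset.card_univ]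
        simp [Fintype.card_finset]
    _ = ((n + 1 : ℕ) : ℝ) * (2 ^ n * 2 ^ n) := by ring
    _ = ((n + 1 : ℕ) : ℝ) * 4 ^ n := by
        congr 1
        rw [← pow_add]
        rw [show (4:ℝ) = 2^2 by norm_num, ← pow_mul]
        congr 1
        omega

lemma sigma_grouped (n s : ℕ) (S : Finset (Fin n)) (hS : S.card = s) :
    ∑ T : Finset (Fin n), ((n + 1 : ℕ) : ℝ) * (n.choose T.card : ℝ)
        * shapW n (T.card - (S ∩ T).card) s ^ 2
      = ∑ k ∈ range (s + 1), (s.choose k : ℝ) * ∑ j ∈ range (n - s + 1),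
          ((n - s).choose j : ℝ)
            * (((n + 1 : ℕ) : ℝ) * (n.choose (k + j) : ℝ) * shapW n j s ^ 2) := by
  rw [sum_split S]
  have hcompl : Sᶜ.card = n - s := by rw [Finset.card_compl, hS, Fintype.card_fin]
  have hAB : ∀ A ∈ S.powerset, ∀ B ∈ Sᶜ.powerset,
      ((n + 1 : ℕ) : ℝ) * (n.choose (A ∪ B).card : ℝ)
          * shapW n ((A ∪ B).card - (S ∩ (A ∪ B)).card) s ^ 2
        = ((n + 1 : ℕ) : ℝ) * (n.choose (A.card + B.card) : ℝ) * shapW n B.card s ^ 2 := by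
    intro A hA B hB
    rw [Finset.mem_powerset] at hA hB
    have hdisj : Disjoint A B := by
      rw [Finset.disjoint_left]
      intro x hxA hxB
      exact (Finset.mem_compl.1 (hB hxB)) (hA hxA)
    have hc : (A ∪ B).card = A.card + B.card := Finset.card_union_of_disjoint hdisj
    have hSAB : S ∩ (A ∪ B) = A := by
      rw [Finset.inter_union_distrib_left]
      have h1 : S ∩ A = A := Finset.inter_eq_right.2 hA
      have h2 : S ∩ B = ∅ := by
        apply Finset.eq_empty_of_forall_notMem
        intro x hx
        exact (Finset.mem_compl.1 (hB (Finset.mem_inter.1 hx).2)) (Finset.mem_inter.1 hx).1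
      rw [h1, h2, Finset.union_empty]
    rw [hc, hSAB]
    have hBc : A.card + B.card - A.card = B.card := by omega
    rw [hBc]
  rw [Finset.sum_congr rfl fun A hA => Finset.sum_congr rfl fun B hB => hAB A hA B hB]
  have hinner : ∀ A ∈ S.powerset,
      ∑ B ∈ Sᶜ.powerset, ((n + 1 : ℕ) : ℝ) * (n.choose (A.card + B.card) : ℝ)
          * shapW n B.card s ^ 2
        = (fun k => ∑ j ∈ range (n - s + 1), ((n - s).choose j : ℝ)
            * (((n + 1 : ℕ) : ℝ) * (n.choose (k + j) : ℝ) * shapW n j s ^ 2)) A.card := by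
    intro A _
    have := sum_powerset_card Sᶜ (fun j => ((n + 1 : ℕ) : ℝ)
        * (n.choose (A.card + j) : ℝ) * shapW n j s ^ 2)
    rw [hcompl] at this
    exact this
  rw [Finset.sum_congr rfl hinner]
  have := sum_powerset_card S (fun k => ∑ j ∈ range (n - s + 1), ((n - s).choose j : ℝ)
      * (((n + 1 : ℕ) : ℝ) * (n.choose (k + j) : ℝ) * shapW n j s ^ 2))
  rw [hS] at this
  exact this

lemma term_bound (n s k j : ℕ) (hs : s ≤ n) (hk : k ≤ s) (hj : j ≤ n - s) :
    ((n - s).choose j : ℝ) * (((n + 1 : ℕ) : ℝ) * (n.choose (k + j) : ℝ) * shapW n j s ^ 2)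
      ≤ ((n + 1 : ℕ) : ℝ) * (n : ℝ) ^ s
        / (((n - s + 1 : ℕ) : ℝ) ^ 2 * (((j + 1 : ℕ) : ℝ) ^ k
            * ((n - s - j + 1 : ℕ) : ℝ) ^ (s - k))) := by
  have hc : (0:ℝ) < ((n - s).choose j : ℝ) := by
    exact_mod_cast Nat.choose_pos hj
  have hM1 : (0:ℝ) < ((n - s + 1 : ℕ) : ℝ) := by positivity
  have ha : (0:ℝ) < ((j + 1 : ℕ) : ℝ) := by positivity
  have hb : (0:ℝ) < ((n - s - j + 1 : ℕ) : ℝ) := by positivity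
  have hR : (0:ℝ) < ((n + 1 : ℕ) : ℝ) := by positivity
  have keyR : (n.choose (k + j) : ℝ) * (((j + 1 : ℕ) : ℝ) ^ k
      * ((n - s - j + 1 : ℕ) : ℝ) ^ (s - k)) ≤ (n : ℝ) ^ s * ((n - s).choose j : ℝ) := by
    exact_mod_cast key_le n s k j hs hk hj
  have habs : ∀ M1 c R ch : ℝ, 0 < M1 → 0 < c →
      c * (R * ch * (1 / (M1 * c)) ^ 2) = R * ch / (M1 ^ 2 * c) := by
    intro M1 c R ch h1 h2
    field_simp
  have hL : ((n - s).choose j : ℝ) * (((n + 1 : ℕ) : ℝ) * (n.choose (k + j) : ℝ)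
      * shapW n j s ^ 2)
      = ((n + 1 : ℕ) : ℝ) * (n.choose (k + j) : ℝ)
        / (((n - s + 1 : ℕ) : ℝ) ^ 2 * ((n - s).choose j : ℝ)) := by
    rw [shapW]
    exact habs _ _ _ _ hM1 hc
  rw [hL, div_le_div_iff₀ (by positivity) (by positivity)]
  calc ((n + 1 : ℕ) : ℝ) * (n.choose (k + j) : ℝ)
        * (((n - s + 1 : ℕ) : ℝ) ^ 2 * (((j + 1 : ℕ) : ℝ) ^ k
            * ((n - s - j + 1 : ℕ) : ℝ) ^ (s - k)))
      = (((n + 1 : ℕ) : ℝ) * ((n - s + 1 : ℕ) : ℝ) ^ 2)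
          * ((n.choose (k + j) : ℝ) * (((j + 1 : ℕ) : ℝ) ^ k
            * ((n - s - j + 1 : ℕ) : ℝ) ^ (s - k))) := by ring
    _ ≤ (((n + 1 : ℕ) : ℝ) * ((n - s + 1 : ℕ) : ℝ) ^ 2)
          * ((n : ℝ) ^ s * ((n - s).choose j : ℝ)) := by
        apply mul_le_mul_of_nonneg_left keyR (by positivity)
    _ = ((n + 1 : ℕ) : ℝ) * (n : ℝ) ^ s
          * (((n - s + 1 : ℕ) : ℝ) ^ 2 * ((n - s).choose j : ℝ)) := by ring

lemma sum_reflect_inv (M : ℕ) (f : ℕ → ℝ) :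
    ∑ j ∈ range (M + 1), f (M - j) = ∑ j ∈ range (M + 1), f j := by
  rw [← Finset.sum_range_reflect f (M + 1)]
  exact Finset.sum_congr rfl fun j hj => by congr 1

lemma cast_sq_sum_le_two (N : ℕ) : ∑ j ∈ range N, (1 : ℝ) / ((j + 1 : ℕ) : ℝ) ^ 2 ≤ 2 := by
  have h := sq_sum_le_two N
  calc ∑ j ∈ range N, (1 : ℝ) / ((j + 1 : ℕ) : ℝ) ^ 2
      = ∑ j ∈ range N, (1 : ℝ) / ((j : ℝ) + 1) ^ 2 := by
        exact Finset.sum_congr rfl fun j _ => by push_cast; ring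
    _ ≤ 2 := h

lemma cast_harm (N : ℕ) (hN : 1 ≤ N) :
    ∑ j ∈ range N, (1 : ℝ) / ((j + 1 : ℕ) : ℝ) ≤ 1 + Real.log N := by
  have h := harmonic_le_log N hN
  calc ∑ j ∈ range N, (1 : ℝ) / ((j + 1 : ℕ) : ℝ)
      = ∑ j ∈ range N, (1 : ℝ) / ((j : ℝ) + 1) := by
        exact Finset.sum_congr rfl fun j _ => by push_cast; ring
    _ ≤ 1 + Real.log N := h

lemma sigma_bound_sge2 (n s : ℕ) (hs2 : 2 ≤ s) (hn : 2 * s ≤ n) :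
    ∑ k ∈ range (s + 1), (s.choose k : ℝ) * ∑ j ∈ range (n - s + 1),
        ((n - s).choose j : ℝ)
          * (((n + 1 : ℕ) : ℝ) * (n.choose (k + j) : ℝ) * shapW n j s ^ 2)
      ≤ 2 ^ (s + 5) * (n : ℝ) ^ (s - 1) := by
  have hsn : s ≤ n := by omega
  set M := n - s with hM
  have hinner : ∀ k ∈ range (s + 1),
      (∑ j ∈ range (M + 1), ((n - s).choose j : ℝ)
          * (((n + 1 : ℕ) : ℝ) * (n.choose (k + j) : ℝ) * shapW n j s ^ 2))
        ≤ ((n + 1 : ℕ) : ℝ) * (n : ℝ) ^ s / ((M + 1 : ℕ) : ℝ) ^ 2 * 4 := by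
    intro k hk
    rw [Finset.mem_range] at hk
    have hks : k ≤ s := by omega
    have step1 : ∀ j ∈ range (M + 1), ((n - s).choose j : ℝ)
        * (((n + 1 : ℕ) : ℝ) * (n.choose (k + j) : ℝ) * shapW n j s ^ 2)
        ≤ (((n + 1 : ℕ) : ℝ) * (n : ℝ) ^ s / ((M + 1 : ℕ) : ℝ) ^ 2)
            * (1 / (((j + 1 : ℕ) : ℝ) ^ 2) + 1 / (((M - j + 1 : ℕ) : ℝ) ^ 2)) := by
      intro j hj
      rw [Finset.mem_range] at hj
      have hjM : j ≤ n - s := by omega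
      have h1 := term_bound n s k j hsn hks hjM
      have ha : (1:ℝ) ≤ ((j + 1 : ℕ) : ℝ) := by exact_mod_cast Nat.succ_le_succ (Nat.zero_le j)
      have hb : (1:ℝ) ≤ ((n - s - j + 1 : ℕ) : ℝ) := by
        exact_mod_cast Nat.succ_le_succ (Nat.zero_le _)
      have h2 := unif_bound ((j + 1 : ℕ) : ℝ) ((n - s - j + 1 : ℕ) : ℝ) ha hb s k hks hs2
      have heq : ((n + 1 : ℕ) : ℝ) * (n : ℝ) ^ s
          / (((n - s + 1 : ℕ) : ℝ) ^ 2 * (((j + 1 : ℕ) : ℝ) ^ k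
              * ((n - s - j + 1 : ℕ) : ℝ) ^ (s - k)))
          = (((n + 1 : ℕ) : ℝ) * (n : ℝ) ^ s / ((M + 1 : ℕ) : ℝ) ^ 2)
              * (1 / (((j + 1 : ℕ) : ℝ) ^ k * ((n - s - j + 1 : ℕ) : ℝ) ^ (s - k))) := by
        rw [hM, div_mul_eq_div_div, div_eq_mul_one_div]
      have hfac : (0:ℝ) ≤ ((n + 1 : ℕ) : ℝ) * (n : ℝ) ^ s / ((M + 1 : ℕ) : ℝ) ^ 2 := by
        positivity
      calc ((n - s).choose j : ℝ)
            * (((n + 1 : ℕ) : ℝ) * (n.choose (k + j) : ℝ) * shapW n j s ^ 2)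
          ≤ ((n + 1 : ℕ) : ℝ) * (n : ℝ) ^ s
              / (((n - s + 1 : ℕ) : ℝ) ^ 2 * (((j + 1 : ℕ) : ℝ) ^ k
                  * ((n - s - j + 1 : ℕ) : ℝ) ^ (s - k))) := h1
        _ = (((n + 1 : ℕ) : ℝ) * (n : ℝ) ^ s / ((M + 1 : ℕ) : ℝ) ^ 2)
              * (1 / (((j + 1 : ℕ) : ℝ) ^ k * ((n - s - j + 1 : ℕ) : ℝ) ^ (s - k))) := heq
        _ ≤ (((n + 1 : ℕ) : ℝ) * (n : ℝ) ^ s / ((M + 1 : ℕ) : ℝ) ^ 2)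
              * (1 / (((j + 1 : ℕ) : ℝ) ^ 2) + 1 / (((n - s - j + 1 : ℕ) : ℝ) ^ 2)) :=
            mul_le_mul_of_nonneg_left h2 hfac
        _ = (((n + 1 : ℕ) : ℝ) * (n : ℝ) ^ s / ((M + 1 : ℕ) : ℝ) ^ 2)
              * (1 / (((j + 1 : ℕ) : ℝ) ^ 2) + 1 / (((M - j + 1 : ℕ) : ℝ) ^ 2)) := by rw [hM]
    calc (∑ j ∈ range (M + 1), ((n - s).choose j : ℝ)
            * (((n + 1 : ℕ) : ℝ) * (n.choose (k + j) : ℝ) * shapW n j s ^ 2))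
        ≤ ∑ j ∈ range (M + 1), (((n + 1 : ℕ) : ℝ) * (n : ℝ) ^ s / ((M + 1 : ℕ) : ℝ) ^ 2)
              * (1 / (((j + 1 : ℕ) : ℝ) ^ 2) + 1 / (((M - j + 1 : ℕ) : ℝ) ^ 2)) :=
          Finset.sum_le_sum step1
      _ = (((n + 1 : ℕ) : ℝ) * (n : ℝ) ^ s / ((M + 1 : ℕ) : ℝ) ^ 2)
            * ∑ j ∈ range (M + 1),
              (1 / (((j + 1 : ℕ) : ℝ) ^ 2) + 1 / (((M - j + 1 : ℕ) : ℝ) ^ 2)) := by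
          rw [Finset.mul_sum]
      _ ≤ ((n + 1 : ℕ) : ℝ) * (n : ℝ) ^ s / ((M + 1 : ℕ) : ℝ) ^ 2 * 4 := by
          apply mul_le_mul_of_nonneg_left _ (by positivity)
          rw [Finset.sum_add_distrib]
          have hx : ∑ j ∈ range (M + 1), (1:ℝ) / (((M - j + 1 : ℕ) : ℝ) ^ 2)
              = ∑ j ∈ range (M + 1), (1:ℝ) / (((j + 1 : ℕ) : ℝ) ^ 2) :=
            sum_reflect_inv M (fun r => (1:ℝ) / (((r + 1 : ℕ) : ℝ) ^ 2))
          rw [hx]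
          have := cast_sq_sum_le_two (M + 1)
          linarith
  have hsum : ∑ k ∈ range (s + 1), (s.choose k : ℝ) * ∑ j ∈ range (M + 1),
        ((n - s).choose j : ℝ)
          * (((n + 1 : ℕ) : ℝ) * (n.choose (k + j) : ℝ) * shapW n j s ^ 2)
      ≤ ∑ k ∈ range (s + 1), (s.choose k : ℝ)
          * (((n + 1 : ℕ) : ℝ) * (n : ℝ) ^ s / ((M + 1 : ℕ) : ℝ) ^ 2 * 4) := by
    apply Finset.sum_le_sum
    intro k hk
    have hnn : (0:ℝ) ≤ (s.choose k : ℝ) := by positivity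
    have hin : (0:ℝ) ≤ ∑ j ∈ range (M + 1), ((n - s).choose j : ℝ)
        * (((n + 1 : ℕ) : ℝ) * (n.choose (k + j) : ℝ) * shapW n j s ^ 2) := by
      apply Finset.sum_nonneg
      intro j hj
      have := shapW_pos n s j (by rw [Finset.mem_range] at hj; omega)
      positivity
    exact mul_le_mul_of_nonneg_left (hinner k hk) hnn
  have hchoose : ∑ k ∈ range (s + 1), (s.choose k : ℝ) = 2 ^ s := by
    rw [← Nat.cast_sum]
    rw [Nat.sum_range_choose]
    push_cast
    ring
  rw [← Finset.sum_mul] at hsum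
  rw [hchoose] at hsum
  refine le_trans hsum ?_
  -- final numeric bound
  have hn4 : (4:ℕ) ≤ n := by omega
  have hnR : (1:ℝ) ≤ (n:ℝ) := by exact_mod_cast (by omega : 1 ≤ n)
  have hR2 : ((n + 1 : ℕ) : ℝ) ≤ 2 * (n:ℝ) := by push_cast; linarith
  have hM2 : (n:ℝ) ≤ 2 * ((M + 1 : ℕ) : ℝ) := by
    have : n ≤ 2 * (M + 1) := by omega
    exact_mod_cast this
  have hpow : (n:ℝ) ^ s = (n:ℝ) ^ (s - 1) * n := by
    rw [← pow_succ]
    congr 1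
    omega
  have hx0 : (0:ℝ) ≤ (n:ℝ) ^ (s - 1) := by positivity
  have hM1pos : (0:ℝ) < ((M + 1 : ℕ) : ℝ) := by positivity
  have key : ((n + 1 : ℕ) : ℝ) * (n : ℝ) ^ s / ((M + 1 : ℕ) : ℝ) ^ 2 * 4
      ≤ 32 * (n:ℝ) ^ (s - 1) := by
    rw [hpow, div_mul_eq_mul_div, div_le_iff₀ (by positivity)]
    calc ((n + 1 : ℕ) : ℝ) * ((n:ℝ) ^ (s - 1) * n) * 4
        ≤ 2 * (n:ℝ) * ((n:ℝ) ^ (s - 1) * n) * 4 := by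
          apply mul_le_mul_of_nonneg_right _ (by norm_num)
          exact mul_le_mul_of_nonneg_right hR2 (by positivity)
      _ = 8 * (n:ℝ) ^ (s - 1) * ((n:ℝ) * (n:ℝ)) := by ring
      _ ≤ 8 * (n:ℝ) ^ (s - 1) * ((2 * ((M + 1 : ℕ) : ℝ)) * (2 * ((M + 1 : ℕ) : ℝ))) := by
          apply mul_le_mul_of_nonneg_left _ (by positivity)
          apply mul_le_mul hM2 hM2 (by positivity) (by positivity)
      _ = 32 * (n:ℝ) ^ (s - 1) * ((M + 1 : ℕ) : ℝ) ^ 2 := by ring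
  calc (2:ℝ) ^ s * (((n + 1 : ℕ) : ℝ) * (n : ℝ) ^ s / ((M + 1 : ℕ) : ℝ) ^ 2 * 4)
      ≤ (2:ℝ) ^ s * (32 * (n:ℝ) ^ (s - 1)) := by
        apply mul_le_mul_of_nonneg_left key (by positivity)
    _ = 2 ^ (s + 5) * (n : ℝ) ^ (s - 1) := by
        rw [pow_add]
        norm_num
        ring

lemma sigma_bound_s1 (n : ℕ) (hn : 2 ≤ n) :
    ∑ k ∈ range (1 + 1), ((1:ℕ).choose k : ℝ) * ∑ j ∈ range (n - 1 + 1),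
        ((n - 1).choose j : ℝ)
          * (((n + 1 : ℕ) : ℝ) * (n.choose (k + j) : ℝ) * shapW n j 1 ^ 2)
      ≤ 12 * Real.log n := by
  have hM : n - 1 + 1 = n := by omega
  have hnpos : (0:ℝ) < (n:ℝ) := by positivity
  have hinner : ∀ k ∈ range (1 + 1),
      (∑ j ∈ range (n - 1 + 1), ((n - 1).choose j : ℝ)
          * (((n + 1 : ℕ) : ℝ) * (n.choose (k + j) : ℝ) * shapW n j 1 ^ 2))
        ≤ (((n + 1 : ℕ) : ℝ) * (n : ℝ) / ((n - 1 + 1 : ℕ) : ℝ) ^ 2)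
            * (1 + Real.log n) := by
    intro k hk
    rw [Finset.mem_range] at hk
    have hks : k ≤ 1 := by omega
    have hfac : (0:ℝ) ≤ ((n + 1 : ℕ) : ℝ) * (n : ℝ) / ((n - 1 + 1 : ℕ) : ℝ) ^ 2 := by
      positivity
    have step1 : ∀ j ∈ range (n - 1 + 1), ((n - 1).choose j : ℝ)
        * (((n + 1 : ℕ) : ℝ) * (n.choose (k + j) : ℝ) * shapW n j 1 ^ 2)
        ≤ (((n + 1 : ℕ) : ℝ) * (n : ℝ) / ((n - 1 + 1 : ℕ) : ℝ) ^ 2)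
            * (1 / (((j + 1 : ℕ) : ℝ) ^ k * ((n - 1 - j + 1 : ℕ) : ℝ) ^ (1 - k))) := by
      intro j hj
      rw [Finset.mem_range] at hj
      have hjM : j ≤ n - 1 := by omega
      have h1 := term_bound n 1 k j (by omega) hks hjM
      rw [pow_one] at h1
      calc ((n - 1).choose j : ℝ)
            * (((n + 1 : ℕ) : ℝ) * (n.choose (k + j) : ℝ) * shapW n j 1 ^ 2)
          ≤ ((n + 1 : ℕ) : ℝ) * (n : ℝ)
              / (((n - 1 + 1 : ℕ) : ℝ) ^ 2 * (((j + 1 : ℕ) : ℝ) ^ k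
                  * ((n - 1 - j + 1 : ℕ) : ℝ) ^ (1 - k))) := h1
        _ = (((n + 1 : ℕ) : ℝ) * (n : ℝ) / ((n - 1 + 1 : ℕ) : ℝ) ^ 2)
              * (1 / (((j + 1 : ℕ) : ℝ) ^ k * ((n - 1 - j + 1 : ℕ) : ℝ) ^ (1 - k))) := by
            rw [div_mul_eq_div_div, div_eq_mul_one_div]
    have hsum1 : ∑ j ∈ range (n - 1 + 1),
        (1:ℝ) / (((j + 1 : ℕ) : ℝ) ^ k * ((n - 1 - j + 1 : ℕ) : ℝ) ^ (1 - k))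
        ≤ 1 + Real.log n := by
      interval_cases k
      · simp only [pow_zero, one_mul, Nat.sub_zero, pow_one]
        have hx : ∑ j ∈ range (n - 1 + 1), (1:ℝ) / (((n - 1 - j + 1 : ℕ) : ℝ))
            = ∑ j ∈ range (n - 1 + 1), (1:ℝ) / (((j + 1 : ℕ) : ℝ)) :=
          sum_reflect_inv (n - 1) (fun r => (1:ℝ) / ((r + 1 : ℕ) : ℝ))
        rw [hx, hM]
        exact cast_harm n (by omega)
      · simp only [pow_one, Nat.sub_self, pow_zero, mul_one]
        rw [hM]
        exact cast_harm n (by omega)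
    calc (∑ j ∈ range (n - 1 + 1), ((n - 1).choose j : ℝ)
            * (((n + 1 : ℕ) : ℝ) * (n.choose (k + j) : ℝ) * shapW n j 1 ^ 2))
        ≤ ∑ j ∈ range (n - 1 + 1), (((n + 1 : ℕ) : ℝ) * (n : ℝ) / ((n - 1 + 1 : ℕ) : ℝ) ^ 2)
              * (1 / (((j + 1 : ℕ) : ℝ) ^ k * ((n - 1 - j + 1 : ℕ) : ℝ) ^ (1 - k))) :=
          Finset.sum_le_sum step1
      _ = (((n + 1 : ℕ) : ℝ) * (n : ℝ) / ((n - 1 + 1 : ℕ) : ℝ) ^ 2)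
            * ∑ j ∈ range (n - 1 + 1),
              (1 / (((j + 1 : ℕ) : ℝ) ^ k * ((n - 1 - j + 1 : ℕ) : ℝ) ^ (1 - k))) := by
          rw [Finset.mul_sum]
      _ ≤ (((n + 1 : ℕ) : ℝ) * (n : ℝ) / ((n - 1 + 1 : ℕ) : ℝ) ^ 2) * (1 + Real.log n) :=
          mul_le_mul_of_nonneg_left hsum1 hfac
  have hlog2 : (1:ℝ) ≤ 2 * Real.log n := by
    have h2 : Real.log 2 ≤ Real.log n := by
      apply Real.log_le_log (by norm_num)
      exact_mod_cast hn
    have := Real.log_two_gt_d9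
    linarith
  have hlogpos : (0:ℝ) ≤ Real.log n := by linarith
  have hbound : (((n + 1 : ℕ) : ℝ) * (n : ℝ) / ((n - 1 + 1 : ℕ) : ℝ) ^ 2) ≤ 2 := by
    rw [hM]
    rw [div_le_iff₀ (by positivity)]
    push_cast
    have h2n : (2:ℝ) ≤ (n:ℝ) := by exact_mod_cast hn
    nlinarith
  have hfin : ∀ k ∈ range (1 + 1), ((1:ℕ).choose k : ℝ) * (∑ j ∈ range (n - 1 + 1),
        ((n - 1).choose j : ℝ)
          * (((n + 1 : ℕ) : ℝ) * (n.choose (k + j) : ℝ) * shapW n j 1 ^ 2))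
      ≤ 2 * (1 + Real.log n) := by
    intro k hk
    have hc : ((1:ℕ).choose k : ℝ) ≤ 1 := by
      rw [Finset.mem_range] at hk
      interval_cases k <;> norm_num
    have hc0 : (0:ℝ) ≤ ((1:ℕ).choose k : ℝ) := by positivity
    have hnn : (0:ℝ) ≤ ∑ j ∈ range (n - 1 + 1), ((n - 1).choose j : ℝ)
        * (((n + 1 : ℕ) : ℝ) * (n.choose (k + j) : ℝ) * shapW n j 1 ^ 2) := by
      apply Finset.sum_nonneg
      intro j hj
      have := shapW_pos n 1 j (by rw [Finset.mem_range] at hj; omega)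
      positivity
    have h1 := hinner k hk
    have h2 : (((n + 1 : ℕ) : ℝ) * (n : ℝ) / ((n - 1 + 1 : ℕ) : ℝ) ^ 2) * (1 + Real.log n)
        ≤ 2 * (1 + Real.log n) := by
      apply mul_le_mul_of_nonneg_right hbound (by linarith)
    nlinarith
  calc ∑ k ∈ range (1 + 1), ((1:ℕ).choose k : ℝ) * ∑ j ∈ range (n - 1 + 1),
        ((n - 1).choose j : ℝ)
          * (((n + 1 : ℕ) : ℝ) * (n.choose (k + j) : ℝ) * shapW n j 1 ^ 2)
      ≤ ∑ _k ∈ range (1 + 1), 2 * (1 + Real.log n) := Finset.sum_le_sum hfin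
    _ = 4 * (1 + Real.log n) := by
        rw [Finset.sum_const, Finset.card_range, nsmul_eq_mul]
        push_cast
        ring
    _ ≤ 12 * Real.log n := by linarith

lemma lev_sum (n : ℕ) : ∑ T : Finset (Fin n), lev n T = 1 := by
  simp only [lev]; exact sum_lev_one n

lemma supNorm_nonneg {n : ℕ} (ν : Finset (Fin n) → ℝ) : 0 ≤ supNorm ν :=
  le_trans (abs_nonneg (ν ∅)) (Finset.le_sup' (fun T => |ν T|) (Finset.mem_univ ∅))

lemma abs_le_supNorm {n : ℕ} (ν : Finset (Fin n) → ℝ) (T : Finset (Fin n)) :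
    |ν T| ≤ supNorm ν := Finset.le_sup' (fun T => |ν T|) (Finset.mem_univ T)

lemma var_le_sigma (n m : ℕ) (hm : 1 ≤ m) (S : Finset (Fin n)) (ν : Finset (Fin n) → ℝ) :
    varFin (lev n) (msr m ν (shapW n) S (lev n))
      ≤ supNorm ν ^ 2 * (∑ T : Finset (Fin n), ((n + 1 : ℕ) : ℝ) * (n.choose T.card : ℝ)
          * shapW n (T.card - (S ∩ T).card) S.card ^ 2) / m := by
  have hP : ∑ T, lev n T = 1 := lev_sum n
  set g := fun T : Finset (Fin n) => ν T * (-1 : ℝ) ^ (S.card - (S ∩ T).card)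
      * shapW n (T.card - (S ∩ T).card) S.card / lev n T with hg
  have hrw : msr m ν (shapW n) S (lev n)
      = fun ω : Fin m → Finset (Fin n) => (1 / (m : ℝ)) * ∑ i, g (ω i) := rfl
  rw [hrw, varFin_avg (lev n) hP g hm]
  have hm0 : (0:ℝ) < (m:ℝ) := by exact_mod_cast (by omega : 0 < m)
  have habs2 : ∀ x sg w D : ℝ, 0 < D → sg ^ 2 = 1 →
      (1 / D) * (x * sg * w / (1 / D)) ^ 2 = x ^ 2 * w ^ 2 * D := by
    intro x sg w D hD hsg
    have hD' : D ≠ 0 := ne_of_gt hD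
    rw [one_div, div_inv_eq_mul]
    have h1 : (x * sg * w * D) ^ 2 = x ^ 2 * w ^ 2 * D ^ 2 * sg ^ 2 := by ring
    rw [h1, hsg, mul_one]
    field_simp
  have hterm : ∀ T : Finset (Fin n), lev n T * g T ^ 2
      = ν T ^ 2 * shapW n (T.card - (S ∩ T).card) S.card ^ 2
          * (((n + 1 : ℕ) : ℝ) * (n.choose T.card : ℝ)) := by
    intro T
    have hTn : T.card ≤ n := by
      simpa using Finset.card_le_univ T
    have hD : (0:ℝ) < ((n + 1 : ℕ) : ℝ) * (n.choose T.card : ℝ) := by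
      have h1 : 0 < n.choose T.card := Nat.choose_pos hTn
      have h2 : (0:ℝ) < (n.choose T.card : ℝ) := by exact_mod_cast h1
      positivity
    have hsg : ((-1 : ℝ) ^ (S.card - (S ∩ T).card)) ^ 2 = 1 := by
      rw [← pow_mul, mul_comm, pow_mul, neg_one_sq, one_pow]
    simp only [hg, lev]
    exact habs2 _ _ _ _ hD hsg
  have hbound : (∑ T, lev n T * g T ^ 2)
      ≤ supNorm ν ^ 2 * (∑ T : Finset (Fin n), ((n + 1 : ℕ) : ℝ) * (n.choose T.card : ℝ)
          * shapW n (T.card - (S ∩ T).card) S.card ^ 2) := by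
    rw [Finset.mul_sum]
    rw [Finset.sum_congr rfl fun T _ => hterm T]
    apply Finset.sum_le_sum
    intro T _
    have hsup : ν T ^ 2 ≤ supNorm ν ^ 2 := by
      have h1 : |ν T| ≤ supNorm ν := abs_le_supNorm ν T
      have h2 : |ν T| ^ 2 ≤ supNorm ν ^ 2 :=
        pow_le_pow_left₀ (abs_nonneg _) h1 2
      rwa [sq_abs] at h2
    have hpos : (0:ℝ) ≤ shapW n (T.card - (S ∩ T).card) S.card ^ 2
        * (((n + 1 : ℕ) : ℝ) * (n.choose T.card : ℝ)) := by positivity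
    calc ν T ^ 2 * shapW n (T.card - (S ∩ T).card) S.card ^ 2
          * (((n + 1 : ℕ) : ℝ) * (n.choose T.card : ℝ))
        = ν T ^ 2 * (shapW n (T.card - (S ∩ T).card) S.card ^ 2
            * (((n + 1 : ℕ) : ℝ) * (n.choose T.card : ℝ))) := by ring
      _ ≤ supNorm ν ^ 2 * (shapW n (T.card - (S ∩ T).card) S.card ^ 2
            * (((n + 1 : ℕ) : ℝ) * (n.choose T.card : ℝ))) :=
          mul_le_mul_of_nonneg_right hsup hpos
      _ = supNorm ν ^ 2 * (((n + 1 : ℕ) : ℝ) * (n.choose T.card : ℝ)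
            * shapW n (T.card - (S ∩ T).card) S.card ^ 2) := by ring
  apply div_le_div_of_nonneg_right ?_ hm0.le
  have hsq : (0:ℝ) ≤ (∑ T, lev n T * g T) ^ 2 := sq_nonneg _
  linarith

end MSRAux

/-- Variance growth of the MSR estimator of the Shapley interaction index under
leverage sampling: for fixed `s ≥ 1` there is a constant `C` (depending only on `s`)
with `Var[φ̂_S] ≤ C ‖ν‖_∞² log(n)/m` for `s = 1` and
`Var[φ̂_S] ≤ C ‖ν‖_∞² n^{s−1}/m` for `s ≥ 2`. -/
theorem msr_shapley_leverage_variance_bound (s : ℕ) (hs : 1 ≤ s) :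
    ∃ C : ℝ, ∀ n : ℕ, max s 2 ≤ n →
      ∀ S : Finset (Fin n), S.card = s →
        ∀ ν : Finset (Fin n) → ℝ, ∀ m : ℕ, 1 ≤ m →
          (s = 1 →
            varFin (lev n) (msr m ν (shapW n) S (lev n))
              ≤ C * supNorm ν ^ 2 * Real.log n / m) ∧
          (2 ≤ s →
            varFin (lev n) (msr m ν (shapW n) S (lev n))
              ≤ C * supNorm ν ^ 2 * (n : ℝ) ^ (s - 1) / m) := by
  use (4 : ℝ) ^ (3 * s + 10)
  intro n hmax S hS ν m hm
  have hn2 : 2 ≤ n := le_trans (le_max_right s 2) hmax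
  have hsn : s ≤ n := le_trans (le_max_left s 2) hmax
  have hm0 : (0:ℝ) < (m:ℝ) := by exact_mod_cast (by omega : 0 < m)
  have hn1R : (1:ℝ) ≤ (n:ℝ) := by exact_mod_cast (by omega : 1 ≤ n)
  have h1 := var_le_sigma n m hm S ν
  rw [hS] at h1
  have hgrp := sigma_grouped n s S hS
  constructor
  · -- s = 1
    intro hs1
    subst hs1
    have hσ : (∑ T : Finset (Fin n), ((n + 1 : ℕ) : ℝ) * (n.choose T.card : ℝ)
        * shapW n (T.card - (S ∩ T).card) 1 ^ 2) ≤ 12 * Real.log n := by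
      rw [hgrp]
      exact sigma_bound_s1 n hn2
    have hlogpos : (0:ℝ) ≤ Real.log n := Real.log_nonneg hn1R
    calc varFin (lev n) (msr m ν (shapW n) S (lev n))
        ≤ supNorm ν ^ 2 * (∑ T : Finset (Fin n), ((n + 1 : ℕ) : ℝ) * (n.choose T.card : ℝ)
            * shapW n (T.card - (S ∩ T).card) 1 ^ 2) / m := h1
      _ ≤ supNorm ν ^ 2 * (12 * Real.log n) / m := by
          apply div_le_div_of_nonneg_right ?_ hm0.le
          exact mul_le_mul_of_nonneg_left hσ (sq_nonneg _)
      _ ≤ (4:ℝ) ^ (3 * 1 + 10) * supNorm ν ^ 2 * Real.log n / m := by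
          apply div_le_div_of_nonneg_right ?_ hm0.le
          have hnn : (0:ℝ) ≤ supNorm ν ^ 2 * Real.log n :=
            mul_nonneg (sq_nonneg _) hlogpos
          have h12 : (12:ℝ) ≤ 4 ^ (3 * 1 + 10) := by norm_num
          calc supNorm ν ^ 2 * (12 * Real.log n)
              = 12 * (supNorm ν ^ 2 * Real.log n) := by ring
            _ ≤ 4 ^ (3 * 1 + 10) * (supNorm ν ^ 2 * Real.log n) :=
                mul_le_mul_of_nonneg_right h12 hnn
            _ = 4 ^ (3 * 1 + 10) * supNorm ν ^ 2 * Real.log n := by ring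
  · -- 2 ≤ s
    intro hs2
    have hx1 : (1:ℝ) ≤ (n:ℝ) ^ (s - 1) := one_le_pow₀ hn1R
    have hσ : (∑ T : Finset (Fin n), ((n + 1 : ℕ) : ℝ) * (n.choose T.card : ℝ)
        * shapW n (T.card - (S ∩ T).card) s ^ 2)
        ≤ (4:ℝ) ^ (3 * s + 10) * (n:ℝ) ^ (s - 1) := by
      by_cases hc : 2 * s ≤ n
      · rw [hgrp]
        refine le_trans (sigma_bound_sge2 n s hs2 hc) ?_
        apply mul_le_mul_of_nonneg_right ?_ (by positivity)
        calc (2:ℝ) ^ (s + 5) ≤ (4:ℝ) ^ (s + 5) :=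
              pow_le_pow_left₀ (by norm_num) (by norm_num) _
          _ ≤ (4:ℝ) ^ (3 * s + 10) := pow_le_pow_right₀ (by norm_num) (by omega)
      · refine le_trans (sigma_small n s S hS) ?_
        have hnat : (n + 1) * 4 ^ n ≤ 4 ^ (3 * s + 10) := by
          have e1 : s < 2 ^ s := Nat.lt_two_pow_self
          have h2s : 2 * 2 ^ s = 2 ^ (s + 1) := by rw [pow_succ]; omega
          have e3 : 2 * s ≤ 2 ^ (s + 1) := by omega
          have e4 : 2 ^ (s + 1) ≤ 4 ^ s := by
            calc (2:ℕ) ^ (s + 1) ≤ 2 ^ (2 * s) :=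
                  Nat.pow_le_pow_right (by norm_num) (by omega)
              _ = 4 ^ s := by rw [pow_mul]; norm_num
          have e5 : (4:ℕ) ^ n ≤ 4 ^ (2 * s) := Nat.pow_le_pow_right (by norm_num) (by omega)
          calc (n + 1) * 4 ^ n ≤ 4 ^ s * 4 ^ (2 * s) := Nat.mul_le_mul (by omega) e5
            _ = 4 ^ (3 * s) := by rw [← pow_add]; congr 1; omega
            _ ≤ 4 ^ (3 * s + 10) := Nat.pow_le_pow_right (by norm_num) (by omega)
        have hcast : ((n + 1 : ℕ) : ℝ) * 4 ^ n ≤ (4:ℝ) ^ (3 * s + 10) := by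
          exact_mod_cast hnat
        calc ((n + 1 : ℕ) : ℝ) * 4 ^ n ≤ (4:ℝ) ^ (3 * s + 10) := hcast
          _ = (4:ℝ) ^ (3 * s + 10) * 1 := (mul_one _).symm
          _ ≤ (4:ℝ) ^ (3 * s + 10) * (n:ℝ) ^ (s - 1) :=
              mul_le_mul_of_nonneg_left hx1 (by positivity)
    calc varFin (lev n) (msr m ν (shapW n) S (lev n))
        ≤ supNorm ν ^ 2 * (∑ T : Finset (Fin n), ((n + 1 : ℕ) : ℝ) * (n.choose T.card : ℝ)
            * shapW n (T.card - (S ∩ T).card) s ^ 2) / m := h1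
      _ ≤ supNorm ν ^ 2 * ((4:ℝ) ^ (3 * s + 10) * (n:ℝ) ^ (s - 1)) / m := by
          apply div_le_div_of_nonneg_right ?_ hm0.le
          exact mul_le_mul_of_nonneg_left hσ (sq_nonneg _)
      _ = (4:ℝ) ^ (3 * s + 10) * supNorm ν ^ 2 * (n:ℝ) ^ (s - 1) / m := by ring
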